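/- Let $F$ be a nontrivial real polynomial of degree $\bar{d}$ in $n$ variables, restricted to a bounded domain $K \subset \mathbb{R}^n$ with piecewise smooth boundary. Then there exists a constant $C_F > 0$ such that for every $\varepsilon \in (0,1]$, $\operatorname{meas}\{x \in K : |F(x)| < \varepsilon\} \leq C_F \varepsilon^{1/\bar{d}}$. -/

import Mathlib

open Polynomial MeasureTheory

-- one-dim sublevel bound
lemma onedim (q : Polynomial ℝ) (d : ℕ) (hqd : q.natDegree ≤ d)
    (hc : q.coeff d ≠ 0) (ε r : ℝ) (hr : 0 < r) (hε : ε ≤ |q.coeff d| * r ^ d) :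
    volume {t : ℝ | |q.eval t| < ε} ≤ ENNReal.ofReal (2 * d * r) := by
  set qC : Polynomial ℂ := q.map (algebraMap ℝ ℂ) with hqC
  have hcoeff : ∀ k, qC.coeff k = (q.coeff k : ℂ) := by
    intro k; simp [hqC, Polynomial.coeff_map]
  have hdeg_le : qC.natDegree ≤ d := by
    rw [hqC, natDegree_map]; exact hqd
  have hdeg_ge : d ≤ qC.natDegree := le_natDegree_of_ne_zero (by simp [hcoeff d, hc])
  have hdeg : qC.natDegree = d := le_antisymm hdeg_le hdeg_ge
  have hsplit : qC.Splits := IsAlgClosed.splits _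
  have hcard : Multiset.card qC.roots = d := by
    rw [← hdeg]; exact (Polynomial.splits_iff_card_roots.mp hsplit)
  have hlead : qC.leadingCoeff = (q.coeff d : ℂ) := by
    rw [Polynomial.leadingCoeff, hdeg, hcoeff]
  have hfac := hsplit.eq_prod_roots
  -- inclusion in union of balls
  have hsub : {t : ℝ | |q.eval t| < ε} ⊆ ⋃ z ∈ qC.roots.toFinset, Metric.ball z.re r := by
    intro t ht
    simp only [Set.mem_setOf_eq] at ht
    by_contra hmem
    simp only [Set.mem_iUnion, Metric.mem_ball, Real.dist_eq, not_exists, not_lt] at hmem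
    have hfar : ∀ z ∈ qC.roots, r ≤ ‖(t : ℂ) - z‖ := by
      intro z hz
      have h1 : r ≤ |t - z.re| := hmem z (Multiset.mem_toFinset.mpr hz)
      refine h1.trans ?_
      have h2 : |t - z.re| = |((t : ℂ) - z).re| := by simp
      rw [h2]; exact Complex.abs_re_le_norm _
    have hevalC : qC.eval (t : ℂ) = ((q.eval t : ℝ) : ℂ) := by
      rw [hqC, Polynomial.eval_map, show ((t:ℂ)) = algebraMap ℝ ℂ t from rfl,
        Polynomial.eval₂_at_apply]
      rfl
    have habs : ‖qC.eval (t : ℂ)‖ = |q.eval t| := by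
      rw [hevalC, Complex.norm_real, Real.norm_eq_abs]
    have hprodge : r ^ d ≤ (Multiset.map (fun a => ‖(t:ℂ) - a‖) qC.roots).prod := by
      have hcard2 : (Multiset.map (fun a => ‖(t:ℂ) - a‖) qC.roots).card = d := by
        rw [Multiset.card_map, hcard]
      rw [← hcard2]
      have key : ∀ (s : Multiset ℝ), (∀ x ∈ s, r ≤ x) → r ^ Multiset.card s ≤ s.prod := by
        intro s
        induction s using Multiset.induction with
        | empty => simp
        | cons a s ih =>
          intro h
          rw [Multiset.card_cons, Multiset.prod_cons, pow_succ, mul_comm]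
          have h1 : r ≤ a := h a (Multiset.mem_cons_self a s)
          have h2 : r ^ Multiset.card s ≤ s.prod := ih fun x hx => h x (Multiset.mem_cons_of_mem hx)
          have : (0:ℝ) ≤ r ^ Multiset.card s := pow_nonneg hr.le _
          nlinarith
      apply key
      intro x hx
      obtain ⟨z, hz, rfl⟩ := Multiset.mem_map.mp hx
      exact hfar z hz
    have hprod : |q.coeff d| * r ^ d ≤ ‖qC.eval (t : ℂ)‖ := by
      conv_rhs => rw [hfac]
      rw [Polynomial.eval_mul, Polynomial.eval_C, norm_mul, hlead, Complex.norm_real, Real.norm_eq_abs,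
        Polynomial.eval_multiset_prod, Multiset.map_map,
        show ∀ s : Multiset ℂ, ‖s.prod‖ = (s.map (‖·‖)).prod from fun s => map_multiset_prod normHom s,
        Multiset.map_map]
      simp only [Function.comp_def, eval_sub, eval_X, eval_C]
      exact mul_le_mul_of_nonneg_left hprodge (abs_nonneg _)
    rw [habs] at hprod
    linarith [le_trans hε hprod]
  refine (measure_mono hsub).trans ?_
  refine (measure_biUnion_finset_le _ _).trans ?_
  have hball : ∀ z : ℂ, volume (Metric.ball z.re r) = ENNReal.ofReal (2 * r) := by
    intro z; rw [Real.volume_ball]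
  calc ∑ z ∈ qC.roots.toFinset, volume (Metric.ball z.re r)
      = qC.roots.toFinset.card • ENNReal.ofReal (2 * r) := by
        rw [Finset.sum_congr rfl fun z _ => hball z, Finset.sum_const]
    _ ≤ d • ENNReal.ofReal (2 * r) := by
        have hle : qC.roots.toFinset.card ≤ d := by
          rw [← hcard]; exact Multiset.toFinset_card_le _
        exact nsmul_le_nsmul_left zero_le hle
    _ ≤ ENNReal.ofReal (2 * d * r) := by
        rw [nsmul_eq_mul, ← ENNReal.ofReal_natCast d, ← ENNReal.ofReal_mul (by positivity)]
        apply ENNReal.ofReal_le_ofReal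
        nlinarith [hr.le]


lemma coeff_prod_at_sum {ι : Type*} [DecidableEq ι] (s : Finset ι) (p : ι → Polynomial ℝ) (k : ι → ℕ)
    (h : ∀ j ∈ s, (p j).natDegree ≤ k j) :
    (∏ j ∈ s, p j).coeff (∑ j ∈ s, k j) = ∏ j ∈ s, (p j).coeff (k j) := by
  induction s using Finset.induction with
  | empty => simp
  | insert _ _ ha ih =>
    rename_i a s
    rw [Finset.prod_insert ha, Finset.sum_insert ha, Finset.prod_insert ha,
      coeff_mul_add_eq_of_natDegree_le (h a (Finset.mem_insert_self a s))
        ((natDegree_prod_le _ _).trans (Finset.sum_le_sum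
          fun j hj => h j (Finset.mem_insert_of_mem hj))),
      ih fun j hj => h j (Finset.mem_insert_of_mem hj)]

noncomputable def lineP {N : ℕ} (F : MvPolynomial (Fin N) ℝ) (x₀ v : Fin N → ℝ) : Polynomial ℝ :=
  MvPolynomial.aeval (fun j => Polynomial.C (x₀ j) + Polynomial.C (v j) * Polynomial.X) F

lemma lineP_eval {N : ℕ} (F : MvPolynomial (Fin N) ℝ) (x₀ v : Fin N → ℝ) (t : ℝ) :
    (lineP F x₀ v).eval t = MvPolynomial.eval (fun j => x₀ j + t * v j) F := by
  unfold lineP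
  induction F using MvPolynomial.induction_on with
  | C a => simp
  | add p q hp hq => simp [hp, hq]
  | mul_X p i hp =>
    rw [map_mul, eval_mul, hp, map_mul, MvPolynomial.aeval_X, MvPolynomial.eval_X,
      eval_add, eval_C, eval_mul, eval_C, eval_X, mul_comm t (v i)]

lemma natDegree_linfactor_le (a b : ℝ) : (Polynomial.C a + Polynomial.C b * Polynomial.X).natDegree ≤ 1 := by
  apply (natDegree_add_le _ _).trans
  simp only [natDegree_C, max_le_iff]
  exact ⟨Nat.zero_le _, (natDegree_C_mul_le _ _).trans (by simp)⟩

lemma lineP_natDegree_le {N : ℕ} (F : MvPolynomial (Fin N) ℝ) (x₀ v : Fin N → ℝ) :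
    (lineP F x₀ v).natDegree ≤ F.totalDegree := by
  unfold lineP
  conv_lhs => rw [F.as_sum]
  rw [map_sum]
  apply natDegree_sum_le_of_forall_le
  intro m hm
  rw [MvPolynomial.aeval_monomial]
  apply (natDegree_mul_le).trans
  simp only [natDegree_C, algebraMap_eq]  -- algebraMap ℝ (Polynomial ℝ) = C
  rw [zero_add]
  refine le_trans ?_ (MvPolynomial.le_totalDegree hm)
  rw [Finsupp.prod]
  apply (natDegree_prod_le _ _).trans
  rw [Finsupp.sum]
  apply Finset.sum_le_sum
  intro j hj
  apply (natDegree_pow_le).trans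
  calc m j * (Polynomial.C (x₀ j) + Polynomial.C (v j) * Polynomial.X).natDegree
      ≤ m j * 1 := Nat.mul_le_mul_left _ (natDegree_linfactor_le _ _)
    _ = m j := Nat.mul_one _

lemma lineP_coeff_top {N : ℕ} (F : MvPolynomial (Fin N) ℝ) (x₀ v : Fin N → ℝ) (d : ℕ)
    (hdeg : F.totalDegree = d) :
    (lineP F x₀ v).coeff d
      = MvPolynomial.eval v (MvPolynomial.homogeneousComponent d F) := by
  unfold lineP
  conv_lhs => rw [F.as_sum]
  rw [map_sum, finset_sum_coeff]
  rw [MvPolynomial.homogeneousComponent_apply, map_sum]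
  rw [← Finset.sum_filter_add_sum_filter_not F.support (fun m => Finsupp.degree m = d)]
  have hzero : ∑ m ∈ F.support.filter (fun m => ¬ Finsupp.degree m = d),
      ((MvPolynomial.aeval fun j => C (x₀ j) + C (v j) * X) (MvPolynomial.monomial m (MvPolynomial.coeff m F))).coeff d = 0 := by
    apply Finset.sum_eq_zero
    intro m hm
    rw [Finset.mem_filter] at hm
    obtain ⟨hm1, hm2⟩ := hm
    have hlt : Finsupp.degree m < d := by
      have hle : Finsupp.degree m ≤ d := by
        rw [← hdeg]
        rw [Finsupp.degree]
        exact MvPolynomial.le_totalDegree hm1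
      omega
    apply coeff_eq_zero_of_natDegree_lt
    rw [MvPolynomial.aeval_monomial]
    apply lt_of_le_of_lt (natDegree_mul_le)
    have h1 : (algebraMap ℝ (Polynomial ℝ) (MvPolynomial.coeff m F)).natDegree = 0 := by
      simp [algebraMap_eq]
    rw [h1, zero_add]
    apply lt_of_le_of_lt _ hlt
    rw [Finsupp.prod, Finsupp.degree]
    apply (natDegree_prod_le _ _).trans
    apply Finset.sum_le_sum
    intro j hj
    apply (natDegree_pow_le).trans
    calc m j * (Polynomial.C (x₀ j) + Polynomial.C (v j) * Polynomial.X).natDegree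
        ≤ m j * 1 := Nat.mul_le_mul_left _ (natDegree_linfactor_le _ _)
      _ = m j := Nat.mul_one _
  rw [hzero, add_zero]
  apply Finset.sum_congr rfl
  intro m hm
  rw [Finset.mem_filter] at hm
  obtain ⟨hm1, hm2⟩ := hm
  rw [MvPolynomial.aeval_monomial, MvPolynomial.eval_monomial]
  rw [algebraMap_eq, coeff_C_mul]
  congr 1
  -- coeff d of the product equals prod of v^m
  have hd' : d = ∑ j ∈ m.support, m j := by rw [← hm2, Finsupp.degree_apply]
  rw [Finsupp.prod, hd', coeff_prod_at_sum _ _ _ ?_]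
  · rw [Finsupp.prod]
    apply Finset.prod_congr rfl
    intro j hj
    have h1 : (Polynomial.C (x₀ j) + Polynomial.C (v j) * Polynomial.X).natDegree ≤ 1 :=
      natDegree_linfactor_le _ _
    have := coeff_pow_of_natDegree_le (m := m j) h1
    rw [Nat.mul_one] at this
    rw [this]
    congr 1
    rw [coeff_add, coeff_C]
    simp
  · intro j hj
    apply (natDegree_pow_le).trans
    calc m j * (Polynomial.C (x₀ j) + Polynomial.C (v j) * Polynomial.X).natDegree
        ≤ m j * 1 := Nat.mul_le_mul_left _ (natDegree_linfactor_le _ _)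
      _ = m j := Nat.mul_one _


noncomputable def shear {N : ℕ} (v : Fin N → ℝ) (i : Fin N) (hv : v i ≠ 0) :
    (Fin N → ℝ) ≃ₗ[ℝ] (Fin N → ℝ) where
  toFun := fun x => x + x i • (v - Pi.single i 1)
  invFun := fun x => x + (x i / v i) • (Pi.single i 1 - v)
  map_add' := by
    intro x y
    funext j
    simp only [Pi.add_apply, Pi.smul_apply, Pi.sub_apply, smul_eq_mul]
    ring
  map_smul' := by
    intro c x
    funext j
    simp only [Pi.smul_apply, Pi.add_apply, Pi.sub_apply, smul_eq_mul, RingHom.id_apply]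
    ring
  left_inv := by
    intro x
    funext j
    simp only [Pi.add_apply, Pi.smul_apply, Pi.sub_apply, smul_eq_mul, Pi.single_eq_same]
    field_simp
    ring
  right_inv := by
    intro x
    funext j
    simp only [Pi.add_apply, Pi.smul_apply, Pi.sub_apply, smul_eq_mul, Pi.single_eq_same]
    field_simp
    ring

lemma shear_apply {N : ℕ} (v : Fin N → ℝ) (i : Fin N) (hv : v i ≠ 0) (x : Fin N → ℝ) :
    shear v i hv x = x + x i • (v - Pi.single i 1) := rfl

lemma shear_single {N : ℕ} (v : Fin N → ℝ) (i : Fin N) (hv : v i ≠ 0) :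
    shear v i hv (Pi.single i 1) = v := by
  rw [shear_apply]
  funext j
  simp only [Pi.add_apply, Pi.smul_apply, Pi.sub_apply, smul_eq_mul, Pi.single_eq_same]
  ring


lemma piFSA_symm {m : ℕ} (i : Fin (m+1)) (t : ℝ) (y : Fin m → ℝ) :
  (MeasurableEquiv.piFinSuccAbove (fun _ => ℝ) i).symm (t, y) = i.insertNth t y := by
  simp [MeasurableEquiv.piFinSuccAbove_symm_apply, Fin.insertNthEquiv]

lemma insertNth_decomp {m : ℕ} (i : Fin (m+1)) (t : ℝ) (y : Fin m → ℝ) :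
    (i.insertNth t y : Fin (m+1) → ℝ) = (i.insertNth 0 y : Fin (m+1) → ℝ) + t • (Pi.single i (1:ℝ) : Fin (m+1) → ℝ) := by
  funext j
  refine Fin.succAboveCases i ?_ ?_ j
  · simp
  · intro j
    simp [Fin.insertNth_apply_succAbove, Pi.single_apply, (Fin.succAbove_ne i j).symm]
theorem stmt13 (n : ℕ) (F : MvPolynomial (Fin n) ℝ) (hF : F ≠ 0) (dbar : ℕ)
    (hdeg : F.totalDegree = dbar) (hd : 1 ≤ dbar)
    (K : Set (Fin n → ℝ)) (hK : Bornology.IsBounded K) (hKm : MeasurableSet K) :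
    ∃ C > 0, ∀ ε : ℝ, 0 < ε → ε ≤ 1 →
      MeasureTheory.volume {x ∈ K | |MvPolynomial.eval x F| < ε}
        ≤ ENNReal.ofReal (C * ε ^ ((1:ℝ) / dbar)) := by
  obtain _ | m := n
  · exfalso
    have h0 : F.totalDegree = 0 := by
      rw [MvPolynomial.totalDegree_eq_zero_iff]
      intro m _ x
      exact x.elim0
    omega
  set Fd := MvPolynomial.homogeneousComponent dbar F with hFdDef
  have hFd : Fd ≠ 0 := by
    have hsup : F.support.Nonempty := MvPolynomial.support_nonempty.mpr hF
    obtain ⟨m0, hm0, hm0d⟩ :=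
      Finset.exists_mem_eq_sup F.support hsup (fun m => m.sum fun _ e => e)
    have hdm0 : Finsupp.degree m0 = dbar := by
      rw [Finsupp.degree, ← hdeg, MvPolynomial.totalDegree, hm0d]
      rfl
    intro hzero
    have hc2 : MvPolynomial.coeff m0 Fd = MvPolynomial.coeff m0 F := by
      rw [hFdDef, MvPolynomial.coeff_homogeneousComponent, if_pos hdm0]
    rw [hzero] at hc2
    exact (MvPolynomial.mem_support_iff.mp hm0) (by simpa using hc2.symm)
  obtain ⟨v, hv⟩ : ∃ v, MvPolynomial.eval v Fd ≠ 0 := by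
    by_contra h
    push_neg at h
    exact hFd
      ((MvPolynomial.homogeneousComponent_isHomogeneous dbar F).eq_zero_of_forall_eval_eq_zero h)
  obtain ⟨i, hi⟩ : ∃ i, v i ≠ 0 := by
    by_contra h
    push_neg at h
    apply hv
    rw [funext h]
    have h1 : MvPolynomial.eval (fun _ => (0:ℝ) : Fin (m+1) → ℝ) Fd = MvPolynomial.coeff 0 Fd := by
      rw [MvPolynomial.eval_zero']; rfl
    rw [h1]
    apply (MvPolynomial.homogeneousComponent_isHomogeneous dbar F).coeff_eq_zero
    simp only [map_zero]
    omega
  set c : ℝ := MvPolynomial.eval v Fd with hcdef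
  set A := shear v i hi with hAdef
  obtain ⟨R, hR⟩ := hK.subset_closedBall 0
  have hAsc : Continuous (A.symm : (Fin (m+1) → ℝ) → (Fin (m+1) → ℝ)) :=
    LinearMap.continuous_of_finiteDimensional (A.symm.toLinearMap)
  have hAc : Continuous (A : (Fin (m+1) → ℝ) → (Fin (m+1) → ℝ)) :=
    LinearMap.continuous_of_finiteDimensional (A.toLinearMap)
  set Q : Set (Fin (m+1) → ℝ) := (A.symm : (Fin (m+1) → ℝ) → _) '' Metric.closedBall 0 R
    with hQdef
  have hQc : IsCompact Q := (isCompact_closedBall 0 R).image hAsc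
  set proj : (Fin (m+1) → ℝ) → (Fin m → ℝ) := fun x j => x (i.succAbove j) with hprojdef
  have hprojc : Continuous proj := continuous_pi fun j => continuous_apply _
  set P : Set (Fin m → ℝ) := proj '' Q with hPdef
  have hPc : IsCompact P := hQc.image hprojc
  have hPfin : MeasureTheory.volume P < ⊤ := hPc.measure_lt_top
  set D : ℝ := |LinearMap.det (A : (Fin (m+1) → ℝ) →ₗ[ℝ] (Fin (m+1) → ℝ))| with hDdef
  have hD0 : 0 < D := by
    rw [hDdef]
    exact abs_pos.mpr (LinearEquiv.isUnit_det' A).ne_zero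
  set VP : ℝ := (MeasureTheory.volume P).toReal with hVPdef
  have hVP0 : 0 ≤ VP := ENNReal.toReal_nonneg
  have hcabs : 0 < |c| := abs_pos.mpr hv
  have hdbar0 : ((dbar : ℝ)) ≠ 0 := Nat.cast_ne_zero.mpr (by omega)
  refine ⟨D * (2 * dbar) * VP / |c| ^ ((1:ℝ)/dbar) + 1, by positivity, ?_⟩
  intro ε hε hε1
  set r : ℝ := (ε / |c|) ^ ((1:ℝ)/dbar) with hrdef
  have hr : 0 < r := by positivity
  have hrpow : r ^ (dbar : ℕ) = ε / |c| := by
    rw [hrdef, ← Real.rpow_natCast ((ε / |c|) ^ ((1:ℝ)/dbar)) dbar,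
      ← Real.rpow_mul (by positivity), one_div, inv_mul_cancel₀ hdbar0, Real.rpow_one]
  have hεr : ε ≤ |c| * r ^ dbar := by
    rw [hrpow, mul_comm, div_mul_cancel₀ _ hcabs.ne']
  have hcoefftop : ∀ x₀ : Fin (m+1) → ℝ, (lineP F x₀ v).coeff dbar = c :=
    fun x₀ => lineP_coeff_top F x₀ v dbar hdeg
  set S := {x ∈ K | |MvPolynomial.eval x F| < ε} with hSdef
  have hContF : Continuous fun x : Fin (m+1) → ℝ => |MvPolynomial.eval x F| :=
    (MvPolynomial.continuous_eval F).abs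
  have hSm : MeasurableSet S :=
    hKm.inter (measurableSet_lt hContF.measurable measurable_const)
  set T := (A : (Fin (m+1) → ℝ) → _) ⁻¹' S with hTdef
  have hTm : MeasurableSet T := hSm.preimage hAc.measurable
  have hvolS : MeasureTheory.volume S = ENNReal.ofReal D * MeasureTheory.volume T := by
    have h1 := MeasureTheory.Measure.addHaar_preimage_linearEquiv
      (MeasureTheory.volume) A.symm T
    have h2 : (A.symm : (Fin (m+1) → ℝ) → _) ⁻¹' T = S := by
      ext x
      simp [hTdef, LinearEquiv.apply_symm_apply]
    rw [h2] at h1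
    simpa [hDdef] using h1
  set me := MeasurableEquiv.piFinSuccAbove (fun _ : Fin (m+1) => ℝ) i with hmedef
  have mp := (MeasureTheory.volume_preserving_piFinSuccAbove (fun _ : Fin (m+1) => ℝ) i).symm
  have hvolT : MeasureTheory.volume T = MeasureTheory.volume (me.symm ⁻¹' T) :=
    (mp.measure_preimage hTm.nullMeasurableSet).symm
  have hTEm : MeasurableSet (me.symm ⁻¹' T) := me.symm.measurable hTm
  have key : MeasureTheory.volume (me.symm ⁻¹' T)
      ≤ ENNReal.ofReal (2 * dbar * r) * MeasureTheory.volume P := by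
    rw [MeasureTheory.Measure.volume_eq_prod, MeasureTheory.Measure.prod_apply_symm hTEm]
    have hslice : ∀ y : Fin m → ℝ,
        MeasureTheory.volume ((fun t => (t, y)) ⁻¹' (me.symm ⁻¹' T))
          ≤ P.indicator (fun _ => ENNReal.ofReal (2 * dbar * r)) y := by
      intro y
      set x₀ : Fin (m+1) → ℝ := A (i.insertNth 0 y) with hx0
      have hAsingle : A (Pi.single i (1:ℝ)) = v := shear_single v i hi
      have hline : ∀ t : ℝ, A (i.insertNth t y) = fun j => x₀ j + t * v j := by
        intro t
        rw [insertNth_decomp i t y, map_add, LinearEquiv.map_smul, hAsingle]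
        funext j
        simp [hx0, smul_eq_mul]
      have hmem : ∀ t : ℝ, t ∈ ((fun t => (t, y)) ⁻¹' (me.symm ⁻¹' T))
          ↔ (A (i.insertNth t y) ∈ K ∧ |MvPolynomial.eval (A (i.insertNth t y)) F| < ε) := by
        intro t
        simp only [Set.mem_preimage, hmedef, piFSA_symm, hTdef, hSdef, Set.mem_setOf_eq]
      by_cases hy : y ∈ P
      · rw [Set.indicator_of_mem hy]
        have hsub2 : ((fun t => (t, y)) ⁻¹' (me.symm ⁻¹' T))
            ⊆ {t : ℝ | |(lineP F x₀ v).eval t| < ε} := by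
          intro t ht
          rw [hmem t] at ht
          rw [Set.mem_setOf_eq, lineP_eval, ← hline t]
          exact ht.2
        refine (MeasureTheory.measure_mono hsub2).trans ?_
        exact onedim (lineP F x₀ v) dbar ((lineP_natDegree_le F x₀ v).trans (le_of_eq hdeg))
          (by rw [hcoefftop x₀]; exact hv) ε r hr (by rw [hcoefftop x₀]; exact hεr)
      · have hempty : ((fun t => (t, y)) ⁻¹' (me.symm ⁻¹' T)) = ∅ := by
          rw [Set.eq_empty_iff_forall_notMem]
          intro t ht
          rw [hmem t] at ht
          apply hy
          refine ⟨i.insertNth t y, ⟨A (i.insertNth t y), hR ht.1, ?_⟩, ?_⟩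
          · simp
          · funext j
            simp [hprojdef, Fin.insertNth_apply_succAbove]
        rw [hempty, Set.indicator_of_notMem hy]
        simp
    refine (MeasureTheory.lintegral_mono hslice).trans ?_
    rw [MeasureTheory.lintegral_indicator_const hPc.measurableSet]
  have hPof : MeasureTheory.volume P = ENNReal.ofReal VP := by
    rw [hVPdef, ENNReal.ofReal_toReal hPfin.ne]
  calc MeasureTheory.volume S = ENNReal.ofReal D * MeasureTheory.volume T := hvolS
    _ = ENNReal.ofReal D * MeasureTheory.volume (me.symm ⁻¹' T) := by rw [hvolT]
    _ ≤ ENNReal.ofReal D * (ENNReal.ofReal (2 * dbar * r) * MeasureTheory.volume P) :=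
        mul_le_mul_right key _
    _ = ENNReal.ofReal (D * (2 * dbar * r * VP)) := by
        rw [hPof, ← ENNReal.ofReal_mul (by positivity), ← ENNReal.ofReal_mul hD0.le]
    _ ≤ ENNReal.ofReal ((D * (2 * dbar) * VP / |c| ^ ((1:ℝ)/dbar) + 1) * ε ^ ((1:ℝ)/dbar)) := by
        apply ENNReal.ofReal_le_ofReal
        have hre : r = ε ^ ((1:ℝ)/dbar) / |c| ^ ((1:ℝ)/dbar) := by
          rw [hrdef, Real.div_rpow hε.le (abs_nonneg c)]
        rw [hre]
        have he1 : (0:ℝ) < ε ^ ((1:ℝ)/dbar) := by positivity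
        have hc1 : (0:ℝ) < |c| ^ ((1:ℝ)/dbar) := by positivity
        have hid : D * (2 * dbar * (ε ^ ((1:ℝ)/dbar) / |c| ^ ((1:ℝ)/dbar)) * VP)
            = (D * (2 * dbar) * VP / |c| ^ ((1:ℝ)/dbar)) * ε ^ ((1:ℝ)/dbar) := by ring
        rw [hid]
        nlinarith [he1.le]
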